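/- Consider an interconnected system with true dynamics f_i and a surrogate system with dynamics f̃_i on the same index set 𝒩 and neighbor sets ℰ_i, where f_i and f̃_i are Lipschitz continuous with constants L_{f_i} and L_{f̃_i}, and each V_i : ℝ^{n_i} → [0,∞) is Lipschitz with constant L_{V_i}. For each i, let 𝒟_i be a rectangular grid with per-dimension step sizes Δ in the bounded operating region 𝒵_i (so every point of 𝒵_i is within Euclidean distance ½|Δ|₂ of 𝒟_i), let ε̂_i = max_{z∈𝒟_i} |f_i(z) − f̃_i(z)|₂ < ∞, and let ε_i = ε̂_i + ½(L_{f_i} + L_{f̃_i})|Δ|₂. Suppose there exist ε ∈ (0,1), ψ ≥ 0, class-𝒦_∞ functions α1, α2 with α1(|x|₂) ≤ V_i(x) ≤ α2(|x|₂) for all i and x, nonnegative gains γ_{i,j} with max_{i∈𝒩} Σ_{j∈ℰ_i∪{i}} γ_{i,j} ≤ 1−ε, and margins δ_i ≥ L_{V_i} ε_i > 0 such that for all admissible states and disturbances in 𝒵_i, V_i(f̃_i(x_{i,k}, {x_{j,k}}_{j∈ℰ_i}, d_{i,k})) ≤ Σ_{j∈ℰ_i∪{i}} γ_{i,j} V_j(x_{j,k})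 + ψ|d_{i,k}|₂ − δ_i. Then the true system satisfies V_i(f_i(x_{i,k}, {x_{j,k}}_{j∈ℰ_i}, d_{i,k})) ≤ Σ_{j∈ℰ_i∪{i}} γ_{i,j} V_j(x_{j,k}) + ψ|d_{i,k}|₂ on 𝒵_i, and hence the true interconnected system is scalably input-to-state stable. -/

import Mathlib

open scoped NNReal
open Filter

noncomputable section

/-- `ℝ^m` with the Euclidean norm. -/
abbrev Evec (m : ℕ) : Type := EuclideanSpace ℝ (Fin m)

/-- A class-𝒦 function: continuous, strictly increasing, vanishing at `0`. -/
def IsClassK (α : ℝ≥0 → ℝ≥0) : Prop :=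
  Continuous α ∧ StrictMono α ∧ α 0 = 0

/-- A class-𝒦∞ function: class 𝒦 and unbounded. -/
def IsClassKInfty (α : ℝ≥0 → ℝ≥0) : Prop :=
  IsClassK α ∧ Tendsto α atTop atTop

/-- A class-𝒦ℒ function. -/
def IsClassKL (β : ℝ≥0 → ℕ → ℝ≥0) : Prop :=
  (∀ k : ℕ, IsClassK fun s => β s k) ∧
    ∀ s : ℝ≥0, Tendsto (fun k => β s k) atTop (nhds 0)

/-- The input space of agent `i`: the tuple `z = (x_i, {x_j}_{j ∈ nbr i}, d_i)`,
carrying the Euclidean norm of the concatenated vector (realized by nesting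
`WithLp 2` and `PiLp 2`). -/
def Zin {ι : Type} (n p : ι → ℕ) (nbr : ι → Finset ι) (i : ι) : Type :=
  WithLp 2 (Evec (n i) ×
    WithLp 2 ((PiLp 2 fun j : {j // j ∈ nbr i} => Evec (n j.1)) × Evec (p i)))

noncomputable instance {ι : Type} (n p : ι → ℕ) (nbr : ι → Finset ι) (i : ι) :
    NormedAddCommGroup (Zin n p nbr i) := by
  unfold Zin; infer_instance

/-- Assembling the input tuple `z = (x_i, {x_j}_{j ∈ nbr i}, d_i)` of agent `i` from
a global state profile `x` and a disturbance `d`. -/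
def packZ {ι : Type} (n p : ι → ℕ) (nbr : ι → Finset ι) (i : ι)
    (x : ∀ j : ι, Evec (n j)) (d : Evec (p i)) : Zin n p nbr i :=
  (WithLp.equiv 2 _).symm
    (x i, (WithLp.equiv 2 _).symm
      ((WithLp.equiv 2 _).symm (fun j : {j // j ∈ nbr i} => x j.1), d))

/- ### auxiliary lemmas -/

lemma IsClassKInfty.surjective {α : ℝ≥0 → ℝ≥0} (h : IsClassKInfty α) :
    Function.Surjective α := by
  obtain ⟨⟨hc, hm, h0⟩, htop⟩ := h
  intro y
  obtain ⟨b, hb⟩ := (tendsto_atTop.mp htop y).exists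
  have : y ∈ Set.Icc (α 0) (α b) := ⟨by rw [h0]; exact (zero_le : 0 ≤ y), hb⟩
  obtain ⟨x, -, hx⟩ := intermediate_value_Icc (zero_le : 0 ≤ b) hc.continuousOn this
  exact ⟨x, hx⟩

noncomputable def KInv {α : ℝ≥0 → ℝ≥0} (h : IsClassKInfty α) : ℝ≥0 ≃o ℝ≥0 :=
  StrictMono.orderIsoOfSurjective α h.1.2.1 h.surjective

lemma KInv_apply {α : ℝ≥0 → ℝ≥0} (h : IsClassKInfty α) (x : ℝ≥0) :
    (KInv h).symm (α x) = x := by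
  have : KInv h x = α x := rfl
  exact this ▸ (KInv h).symm_apply_apply x

lemma KInv_zero {α : ℝ≥0 → ℝ≥0} (h : IsClassKInfty α) : (KInv h).symm 0 = 0 := by
  have := KInv_apply h 0
  rwa [h.1.2.2] at this

lemma KInv_add_le {α : ℝ≥0 → ℝ≥0} (h : IsClassKInfty α) (a b : ℝ≥0) :
    (KInv h).symm (a + b) ≤ (KInv h).symm (2 * a) + (KInv h).symm (2 * b) := by
  rcases le_total a b with hab | hab
  · calc (KInv h).symm (a + b) ≤ (KInv h).symm (2 * b) := by
          apply (KInv h).symm.monotone; rw [two_mul]; exact add_le_add_left hab b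
      _ ≤ _ := le_add_self
  · calc (KInv h).symm (a + b) ≤ (KInv h).symm (2 * a) := by
          apply (KInv h).symm.monotone; rw [two_mul]; exact add_le_add_right hab a
      _ ≤ _ := le_self_add

lemma le_KInv {α : ℝ≥0 → ℝ≥0} (h : IsClassKInfty α) {x y : ℝ≥0} (hxy : α x ≤ y) :
    x ≤ (KInv h).symm y := by
  have := (KInv h).symm.monotone hxy
  rwa [KInv_apply h] at this

lemma geom_bound (ε : ℝ≥0) (hε0 : 0 < ε) (hε1 : ε ≤ 1) (q : ℝ≥0) (W : ℕ → ℝ≥0)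
    (hstep : ∀ k, W (k + 1) ≤ (1 - ε) * W k + q) :
    ∀ k, W k ≤ (1 - ε) ^ k * W 0 + q / ε := by
  have hq : (1 - ε) * (q / ε) + q = q / ε := by
    have h3 : q / ε * ε = q := div_mul_cancel₀ q hε0.ne'
    calc (1 - ε) * (q / ε) + q = (1 - ε) * (q / ε) + ε * (q / ε) := by
          rw [mul_comm ε, h3]
      _ = ((1 - ε) + ε) * (q / ε) := by rw [add_mul]
      _ = q / ε := by rw [tsub_add_cancel_of_le hε1, one_mul]
  intro k
  induction k with
  | zero => simp only [pow_zero, one_mul]; exact le_self_add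
  | succ k ih =>
    calc W (k + 1) ≤ (1 - ε) * W k + q := hstep k
      _ ≤ (1 - ε) * ((1 - ε) ^ k * W 0 + q / ε) + q := by gcongr
      _ = (1 - ε) ^ (k + 1) * W 0 + ((1 - ε) * (q / ε) + q) := by ring
      _ = (1 - ε) ^ (k + 1) * W 0 + q / ε := by rw [hq]

/-- **Robust sISS verification.** Suppose the true dynamics `f i` and the surrogate
dynamics `ftil i` of each agent are Lipschitz with constants `Lf i` and `Lftil i`,
and the Lyapunov functions `V i` are Lipschitz with constants `LV i`. Let `𝒟 i` be a
grid in the bounded operating region `𝒵 i` with covering radius `Δ/2` (for a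
rectangular grid with per-dimension steps `Δvec`, `Δ = |Δvec|₂`), let `εhat i` bound
the surrogate error on the grid, and set `ε_i = εhat i + (Lf i + Lftil i) Δ / 2`.
If `V` satisfies class-𝒦∞ sandwich bounds and, with margins `δ i ≥ LV i * ε_i > 0`,
the strengthened decremental condition holds for the surrogate on `𝒵 i`, then the
decremental condition holds for the true dynamics on `𝒵 i`, and hence the true
interconnected system is scalably input-to-state stable. -/
theorem robust_sISS_verification
    {ι : Type} [Fintype ι] [Nonempty ι] [DecidableEq ι]
    (n p : ι → ℕ) (nbr : ι → Finset ι)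
    (f ftil : ∀ i : ι, Zin n p nbr i → Evec (n i))
    (Lf Lftil LV : ι → ℝ≥0)
    (hLf : ∀ i : ι, LipschitzWith (Lf i) (f i))
    (hLftil : ∀ i : ι, LipschitzWith (Lftil i) (ftil i))
    (V : ∀ i : ι, Evec (n i) → ℝ≥0)
    (hLV : ∀ i : ι, LipschitzWith (LV i) (V i))
    (𝒵 𝒟 : ∀ i : ι, Set (Zin n p nbr i))
    (hDZ : ∀ i : ι, 𝒟 i ⊆ 𝒵 i)
    (Δ : ℝ≥0)
    (hcover : ∀ i : ι, ∀ z ∈ 𝒵 i, ∃ z' ∈ 𝒟 i, dist z z' ≤ (Δ : ℝ) / 2)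
    (εhat : ι → ℝ≥0)
    (hgrid : ∀ i : ι, ∀ z ∈ 𝒟 i, dist (f i z) (ftil i z) ≤ (εhat i : ℝ))
    (δ : ι → ℝ≥0)
    (hδpos : ∀ i : ι, 0 < LV i * (εhat i + (Lf i + Lftil i) * Δ / 2))
    (hδ : ∀ i : ι, LV i * (εhat i + (Lf i + Lftil i) * Δ / 2) ≤ δ i)
    (ε : ℝ≥0) (hε0 : 0 < ε) (hε1 : ε < 1) (ψ : ℝ≥0)
    (α₁ α₂ : ℝ≥0 → ℝ≥0) (hα₁ : IsClassKInfty α₁) (hα₂ : IsClassKInfty α₂)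
    (γ : ι → ι → ℝ≥0)
    (hsg : ∀ i : ι, ∑ j ∈ insert i (nbr i), γ i j ≤ 1 - ε)
    (hsandwich : ∀ (i : ι) (x : Evec (n i)), α₁ ‖x‖₊ ≤ V i x ∧ V i x ≤ α₂ ‖x‖₊)
    -- strengthened decremental condition for the surrogate dynamics on `𝒵 i`
    (hdectil : ∀ (i : ι) (x : ∀ j : ι, Evec (n j)) (d : Evec (p i)),
      packZ n p nbr i x d ∈ 𝒵 i →
      V i (ftil i (packZ n p nbr i x d)) + δ i ≤
        ∑ j ∈ insert i (nbr i), γ i j * V j (x j) + ψ * ‖d‖₊) :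
    -- the decremental condition holds for the true dynamics on `𝒵 i` …
    (∀ (i : ι) (x : ∀ j : ι, Evec (n j)) (d : Evec (p i)),
      packZ n p nbr i x d ∈ 𝒵 i →
      V i (f i (packZ n p nbr i x d)) ≤
        ∑ j ∈ insert i (nbr i), γ i j * V j (x j) + ψ * ‖d‖₊) ∧
    -- … and hence the true system is scalably input-to-state stable
    (∃ β : ℝ≥0 → ℕ → ℝ≥0, ∃ μ : ℝ≥0 → ℝ≥0, IsClassKL β ∧ IsClassK μ ∧
      ∀ (x : ℕ → ∀ j : ι, Evec (n j)) (d : ℕ → ∀ i : ι, Evec (p i)),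
        (∀ (k : ℕ) (i : ι), packZ n p nbr i (x k) (d k i) ∈ 𝒵 i) →
        (∀ (k : ℕ) (i : ι), x (k + 1) i = f i (packZ n p nbr i (x k) (d k i))) →
        ∀ C : ℝ≥0, (∀ (k : ℕ) (i : ι), ‖d k i‖₊ ≤ C) →
        ∀ (k : ℕ) (i : ι),
          ‖x k i‖₊ ≤ β (Finset.univ.sup fun j => ‖x 0 j‖₊) k + μ C) := by
  -- Part 1: decremental condition for the true dynamics
  have hdec : ∀ (i : ι) (x : ∀ j : ι, Evec (n j)) (d : Evec (p i)),
      packZ n p nbr i x d ∈ 𝒵 i →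
      V i (f i (packZ n p nbr i x d)) ≤
        ∑ j ∈ insert i (nbr i), γ i j * V j (x j) + ψ * ‖d‖₊ := by
    intro i x d hz
    set z := packZ n p nbr i x d with hzdef
    obtain ⟨z', hz'D, hz'd⟩ := hcover i z hz
    have hdist : dist (f i z) (ftil i z) ≤
        (εhat i : ℝ) + ((Lf i : ℝ) + Lftil i) * Δ / 2 := by
      calc dist (f i z) (ftil i z)
          ≤ dist (f i z) (f i z') + dist (f i z') (ftil i z') +
            dist (ftil i z') (ftil i z) := dist_triangle4 _ _ _ _
        _ ≤ (Lf i : ℝ) * ((Δ : ℝ) / 2) + εhat i + (Lftil i : ℝ) * ((Δ : ℝ) / 2) := by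
            refine add_le_add (add_le_add ?_ (hgrid i z' hz'D)) ?_
            · exact ((hLf i).dist_le_mul z z').trans
                (mul_le_mul_of_nonneg_left hz'd (Lf i).coe_nonneg)
            · exact ((hLftil i).dist_le_mul z' z).trans
                (by rw [dist_comm]
                    exact mul_le_mul_of_nonneg_left hz'd (Lftil i).coe_nonneg)
        _ = (εhat i : ℝ) + ((Lf i : ℝ) + Lftil i) * Δ / 2 := by ring
    have hV : (V i (f i z) : ℝ) ≤ (V i (ftil i z) : ℝ) + δ i := by
      calc (V i (f i z) : ℝ)
          ≤ (V i (ftil i z) : ℝ) + dist (V i (f i z)) (V i (ftil i z)) := by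
            rw [NNReal.dist_eq]
            have := abs_nonneg ((V i (f i z) : ℝ) - V i (ftil i z))
            have h2 := le_abs_self ((V i (f i z) : ℝ) - V i (ftil i z))
            linarith
        _ ≤ (V i (ftil i z) : ℝ) + (LV i : ℝ) * dist (f i z) (ftil i z) :=
            add_le_add_right ((hLV i).dist_le_mul _ _) _
        _ ≤ (V i (ftil i z) : ℝ) +
              (LV i : ℝ) * ((εhat i : ℝ) + ((Lf i : ℝ) + Lftil i) * Δ / 2) :=
            add_le_add_right (mul_le_mul_of_nonneg_left hdist (LV i).coe_nonneg) _
        _ ≤ (V i (ftil i z) : ℝ) + δ i := by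
            gcongr
            have := hδ i
            have : ((LV i * (εhat i + (Lf i + Lftil i) * Δ / 2) : ℝ≥0) : ℝ) ≤ (δ i : ℝ) :=
              NNReal.coe_le_coe.mpr this
            push_cast at this
            linarith
    have hfinal : (V i (f i z) : ℝ) ≤
        ((∑ j ∈ insert i (nbr i), γ i j * V j (x j) + ψ * ‖d‖₊ : ℝ≥0) : ℝ) := by
      refine hV.trans ?_
      have := hdectil i x d hz
      calc (V i (ftil i z) : ℝ) + δ i
          = ((V i (ftil i z) + δ i : ℝ≥0) : ℝ) := by push_cast; ring
        _ ≤ _ := NNReal.coe_le_coe.mpr this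
    exact_mod_cast hfinal
  refine ⟨hdec, ?_⟩
  -- Part 2: sISS
  set g : ℝ≥0 → ℝ≥0 := fun y => (KInv hα₁).symm y with hg
  have hgc : Continuous g := OrderIso.continuous (KInv hα₁).symm
  have hgm : StrictMono g := (KInv hα₁).symm.strictMono
  have hg0 : g 0 = 0 := KInv_zero hα₁
  have hone : (0 : ℝ≥0) < 1 - ε := tsub_pos_of_lt hε1
  have honelt : (1 : ℝ≥0) - ε < 1 := tsub_lt_self one_pos hε0
  refine ⟨fun s k => g (2 * ((1 - ε) ^ k * α₂ s)),
    fun C => g (2 * (ψ * C / ε)) + C, ⟨?_, ?_⟩, ⟨?_, ?_, ?_⟩, ?_⟩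
  · -- each β(·, k) class K
    intro k
    refine ⟨?_, ?_, ?_⟩
    · exact hgc.comp (continuous_const.mul (continuous_const.mul hα₂.1.1))
    · intro a b hab
      apply hgm
      have : α₂ a < α₂ b := hα₂.1.2.1 hab
      have h2 : (0:ℝ≥0) < 2 * (1 - ε) ^ k := by positivity
      calc 2 * ((1 - ε) ^ k * α₂ a) = 2 * (1 - ε) ^ k * α₂ a := by ring
        _ < 2 * (1 - ε) ^ k * α₂ b := by exact mul_lt_mul_of_pos_left this h2
        _ = 2 * ((1 - ε) ^ k * α₂ b) := by ring
    · simp [hα₂.1.2.2, hg0]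
  · -- β(s, ·) → 0
    intro s
    have h1 : Tendsto (fun k : ℕ => (1 - ε) ^ k) atTop (nhds 0) :=
      NNReal.tendsto_pow_atTop_nhds_zero_of_lt_one honelt
    have h2 : Tendsto (fun k : ℕ => 2 * ((1 - ε) ^ k * α₂ s)) atTop (nhds 0) := by
      have := (h1.mul_const (α₂ s)).const_mul (2 : ℝ≥0)
      simpa using this
    have := (hgc.tendsto 0).comp h2
    rwa [hg0] at this
  · -- μ continuous
    have heq : (fun C : ℝ≥0 => 2 * (ψ * C / ε)) = fun C => 2 * ψ / ε * C := by
      funext C; simp only [div_eq_mul_inv]; ring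
    exact (hgc.comp (heq ▸ continuous_const.mul continuous_id)).add continuous_id
  · -- μ strict mono
    intro a b hab
    have h1 : g (2 * (ψ * a / ε)) ≤ g (2 * (ψ * b / ε)) := by
      apply hgm.monotone; gcongr
    exact add_lt_add_of_le_of_lt h1 hab
  · simp [hg0]
  · -- trajectory bound
    intro x d hZ hdyn C hC k i
    set W : ℕ → ℝ≥0 := fun k => Finset.univ.sup fun j => V j (x k j) with hW
    have hVW : ∀ k j, V j (x k j) ≤ W k := fun k j => by
      simp only [hW]; exact Finset.le_sup (f := fun j => V j (x k j)) (Finset.mem_univ j)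
    have hstep : ∀ k, W (k + 1) ≤ (1 - ε) * W k + ψ * C := by
      intro k
      simp only [hW]
      refine Finset.sup_le fun i _ => ?_
      rw [hdyn k i]
      calc V i (f i (packZ n p nbr i (x k) (d k i)))
          ≤ ∑ j ∈ insert i (nbr i), γ i j * V j (x k j) + ψ * ‖d k i‖₊ :=
            hdec i (x k) (d k i) (hZ k i)
        _ ≤ ∑ j ∈ insert i (nbr i), γ i j * W k + ψ * C := by
            gcongr with j hj
            · exact hVW k j
            · exact hC k i
        _ = (∑ j ∈ insert i (nbr i), γ i j) * W k + ψ * C := by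
            rw [Finset.sum_mul]
        _ ≤ (1 - ε) * W k + ψ * C := by gcongr; exact hsg i
    have hWk : W k ≤ (1 - ε) ^ k * W 0 + ψ * C / ε :=
      geom_bound ε hε0 hε1.le (ψ * C) W hstep k
    have hW0 : W 0 ≤ α₂ (Finset.univ.sup fun j => ‖x 0 j‖₊) := by
      simp only [hW]
      refine Finset.sup_le fun j _ => (hsandwich j (x 0 j)).2.trans ?_
      exact hα₂.1.2.1.monotone (Finset.le_sup (f := fun j => ‖x 0 j‖₊) (Finset.mem_univ j))
    calc ‖x k i‖₊ ≤ g (V i (x k i)) := le_KInv hα₁ (hsandwich i (x k i)).1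
      _ ≤ g ((1 - ε) ^ k * W 0 + ψ * C / ε) :=
          hgm.monotone ((hVW k i).trans hWk)
      _ ≤ g (2 * ((1 - ε) ^ k * W 0)) + g (2 * (ψ * C / ε)) :=
          KInv_add_le hα₁ _ _
      _ ≤ g (2 * ((1 - ε) ^ k * α₂ (Finset.univ.sup fun j => ‖x 0 j‖₊))) +
          (g (2 * (ψ * C / ε)) + C) := by
          gcongr
          · exact hgm.monotone (by gcongr)
          · exact le_self_add
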